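/- Let B_ss ⊆ B_s ⊆ B_w be normed spaces of signed Borel measures on a compact metric space X with ‖·‖_w ≤ ‖·‖_s ≤ ‖·‖_ss, and let V_i denote the subspace of zero-total-mass elements of B_i. Suppose (L_δ)_{δ∈[0,δ̄)} is a family of bounded Markov operators on each B_i such that: (LR1) each L_δ has a fixed probability measure h_δ ∈ B_ss with ‖h_δ‖_ss ≤ M uniformly; (LR2) there is a sequence a_n → 0 with ‖L_0^n g‖_s ≤ a_n ‖g‖_ss for all g ∈ V_ss; (LR3) the resolvent (Id − L_0)^{-1} = Σ_{i≥0} L_0^i is a bounded operator V_w → V_w; (LR4) ‖L_0 − L_δ‖_{B_s→B_w} ≤ Kδ, ‖L_0 − L_δ‖_{B_ss→B_s} ≤ Kδ, and there exists L̇h_0 ∈ V_w with ‖(L_δ − L_0)h_0/δ − L̇h_0‖_w → 0 as δ → 0. Then ‖(h_δ − h_0)/δ − (Id − L_0)^{-1} L̇h_0‖_w → 0 as δ → 0. -/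
import Mathlib


open Filter Topology Set

/-- **Abstract linear response theorem** (Theorem 2.1 / `thm:linresp`).
The nested spaces `B_ss ⊆ B_s ⊆ B_w` of signed measures are modeled by normed
spaces `Bss`, `Bs`, `Bw` together with injective norm-nonincreasing linear
inclusions `iss : Bss → Bs`, `is : Bs → Bw`; the continuous mass functional
`μ ↦ μ(X)` is `mass : Bw →L[ℝ] ℝ` (hence defined on all three spaces by
restriction); a Markov operator preserves the mass and positivity. -/
theorem linear_response
    {Bss Bs Bw : Type*}
    [NormedAddCommGroup Bss] [NormedSpace ℝ Bss]
    [NormedAddCommGroup Bs] [NormedSpace ℝ Bs]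
    [NormedAddCommGroup Bw] [NormedSpace ℝ Bw]
    [PartialOrder Bw]
    (iss : Bss →ₗ[ℝ] Bs) (is : Bs →ₗ[ℝ] Bw)
    (hiss_inj : Function.Injective iss) (his_inj : Function.Injective is)
    (hiss_norm : ∀ x : Bss, ‖iss x‖ ≤ ‖x‖) (his_norm : ∀ x : Bs, ‖is x‖ ≤ ‖x‖)
    (mass : Bw →L[ℝ] ℝ)
    (δbar : ℝ) (hδbar : 0 < δbar)
    -- the family of operators, acting (compatibly) on the three spaces
    (Lss : ℝ → Bss →L[ℝ] Bss) (Ls : ℝ → Bs →L[ℝ] Bs) (Lw : ℝ → Bw →L[ℝ] Bw)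
    (hcomm_ss : ∀ δ, δ ∈ Ico 0 δbar → ∀ x : Bss, iss (Lss δ x) = Ls δ (iss x))
    (hcomm_s : ∀ δ, δ ∈ Ico 0 δbar → ∀ x : Bs, is (Ls δ x) = Lw δ (is x))
    -- Markov: preservation of mass and of positivity
    (hmass : ∀ δ, δ ∈ Ico 0 δbar → ∀ x : Bw, mass (Lw δ x) = mass x)
    (hpos : ∀ δ, δ ∈ Ico 0 δbar → ∀ x : Bw, 0 ≤ x → 0 ≤ Lw δ x)
    -- (LR1) regularity bounds: fixed probability measures, uniformly bounded in B_ss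
    (h : ℝ → Bss) (M : ℝ)
    (hfix : ∀ δ, δ ∈ Ico 0 δbar → Lss δ (h δ) = h δ)
    (hprob_mass : ∀ δ, δ ∈ Ico 0 δbar → mass (is (iss (h δ))) = 1)
    (hprob_pos : ∀ δ, δ ∈ Ico 0 δbar → 0 ≤ is (iss (h δ)))
    (hM : ∀ δ, δ ∈ Ico 0 δbar → ‖h δ‖ ≤ M)
    -- (LR2) convergence to equilibrium for the unperturbed operator
    (a : ℕ → ℝ) (ha : Tendsto a atTop (𝓝 0))
    (hconv : ∀ g : Bss, mass (is (iss g)) = 0 → ∀ n : ℕ, ‖(Ls 0 ^ n) (iss g)‖ ≤ a n * ‖g‖)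
    -- (LR3) the resolvent `(Id - L₀)⁻¹ = ∑ L₀ⁱ` is a bounded operator on V_w
    (Res : Bw →L[ℝ] Bw)
    (hRes : ∀ g : Bw, mass g = 0 → HasSum (fun n : ℕ => (Lw 0 ^ n) g) (Res g))
    -- (LR4) small perturbation and derivative operator
    (K : ℝ)
    (hK1 : ∀ δ, δ ∈ Ico 0 δbar → ∀ f : Bs, ‖is (Ls 0 f) - is (Ls δ f)‖ ≤ K * δ * ‖f‖)
    (hK2 : ∀ δ, δ ∈ Ico 0 δbar → ∀ f : Bss, ‖iss (Lss 0 f) - iss (Lss δ f)‖ ≤ K * δ * ‖f‖)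
    (Ldot : Bw) (hLdotV : mass Ldot = 0)
    (hLdot : Tendsto
      (fun δ : ℝ => ‖δ⁻¹ • (Lw δ (is (iss (h 0))) - Lw 0 (is (iss (h 0)))) - Ldot‖)
      (𝓝[>] 0) (𝓝 0)) :
    -- linear response formula, with convergence in the weak norm
    Tendsto (fun δ : ℝ => ‖δ⁻¹ • (is (iss (h δ)) - is (iss (h 0))) - Res Ldot‖)
      (𝓝[>] 0) (𝓝 0) := by

  have h0mem : (0:ℝ) ∈ Ico (0:ℝ) δbar := ⟨le_refl 0, hδbar⟩
  have hM0 : (0:ℝ) ≤ M := (norm_nonneg _).trans (hM 0 h0mem)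
  set K' : ℝ := max K 0 with hK'def
  have hK'0 : (0:ℝ) ≤ K' := le_max_right _ _
  have hKK' : K ≤ K' := le_max_left _ _
  -- fixed points in the various spaces
  have hfixs : ∀ δ ∈ Ico (0:ℝ) δbar, Ls δ (iss (h δ)) = iss (h δ) := by
    intro δ hδ
    rw [← hcomm_ss δ hδ, hfix δ hδ]
  have hfixw : ∀ δ ∈ Ico (0:ℝ) δbar, Lw δ (is (iss (h δ))) = is (iss (h δ)) := by
    intro δ hδ
    rw [← hcomm_s δ hδ, hfixs δ hδ]
  have hfixsN : ∀ n : ℕ, (Ls 0 ^ n) (iss (h 0)) = iss (h 0) := by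
    intro n
    induction n with
    | zero => simp
    | succ n ih =>
      rw [pow_succ, ContinuousLinearMap.mul_apply, hfixs 0 h0mem, ih]
  -- resolvent identity
  have hResId : ∀ g : Bw, mass g = 0 → Res (g - Lw 0 g) = g := by
    intro g hg
    have hg' : mass (Lw 0 g) = 0 := by rw [hmass 0 h0mem g]; exact hg
    have hs := hRes g hg
    have hs' := hRes (Lw 0 g) hg'
    have hshift : HasSum (fun n : ℕ => (Lw 0 ^ (n + 1)) g) (Res g - (Lw 0 ^ 0) g) := by
      refine (hasSum_nat_add_iff (f := fun n : ℕ => (Lw 0 ^ n) g) 1).2 ?_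
      simpa using hs
    have heq : (fun n : ℕ => (Lw 0 ^ n) (Lw 0 g)) = fun n : ℕ => (Lw 0 ^ (n + 1)) g := by
      funext n
      rw [pow_succ, ContinuousLinearMap.mul_apply]
    rw [heq] at hs'
    have h2 : Res (Lw 0 g) = Res g - g := by
      have := hs'.unique hshift
      simpa using this
    rw [map_sub, h2]
    abel
  -- one step bound
  have hstep : ∀ δ ∈ Ico (0:ℝ) δbar, ‖Ls 0 (iss (h δ)) - iss (h δ)‖ ≤ K' * δ * M := by
    intro δ hδ
    have h1 : Ls 0 (iss (h δ)) - iss (h δ) = iss (Lss 0 (h δ)) - iss (Lss δ (h δ)) := by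
      rw [hcomm_ss 0 h0mem, hfix δ hδ]
    rw [h1]
    have h2 := hK2 δ hδ (h δ)
    have h3 := hM δ hδ
    have h4 := norm_nonneg (h δ)
    have e1 : 0 ≤ (K' - K) * δ * ‖h δ‖ :=
      mul_nonneg (mul_nonneg (sub_nonneg.2 hKK') hδ.1) h4
    have e2 : 0 ≤ K' * δ * (M - ‖h δ‖) :=
      mul_nonneg (mul_nonneg hK'0 hδ.1) (sub_nonneg.2 h3)
    nlinarith [e1, e2]
  -- convergence of h δ to h 0 in the strong norm
  have hphi : Tendsto (fun δ : ℝ => ‖iss (h δ) - iss (h 0)‖) (𝓝[>] (0:ℝ)) (𝓝 0) := by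
    rw [Metric.tendsto_nhdsWithin_nhds]
    intro ε hε
    obtain ⟨N, hN⟩ : ∃ N, |a N| * (2 * M) < ε / 2 := by
      have h2 : (0:ℝ) < ε / (2 * (2 * M + 1)) := by positivity
      obtain ⟨N, hN⟩ := (ha.abs.eventually (gt_mem_nhds
        (show |(0:ℝ)| < ε / (2 * (2 * M + 1)) by simpa using h2))).exists
      have h3 : |a N| * (2 * (2 * M + 1)) < ε := (lt_div_iff₀ (by positivity)).1 hN
      exact ⟨N, by nlinarith [abs_nonneg (a N)]⟩
    set C : ℝ := ∑ k ∈ Finset.range N, ‖(Ls 0) ^ k‖ with hC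
    have hC0 : (0:ℝ) ≤ C := Finset.sum_nonneg fun _ _ => norm_nonneg _
    refine ⟨min δbar (ε / (2 * (C * K' * M + 1))), lt_min hδbar (by positivity), ?_⟩
    intro δ hδ hdist
    have hδ0 : (0:ℝ) < δ := hδ
    rw [Real.dist_eq, sub_zero, abs_of_pos hδ0] at hdist
    have hδd : δ < δbar := hdist.trans_le (min_le_left _ _)
    have hδe : δ < ε / (2 * (C * K' * M + 1)) := hdist.trans_le (min_le_right _ _)
    have hδmem : δ ∈ Ico (0:ℝ) δbar := ⟨hδ0.le, hδd⟩
    have hdecomp : iss (h δ) - iss (h 0) =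
        (Ls 0 ^ N) (iss (h δ) - iss (h 0)) + (iss (h δ) - (Ls 0 ^ N) (iss (h δ))) := by
      rw [map_sub, hfixsN N]
      abel
    have hterm1 : ‖(Ls 0 ^ N) (iss (h δ) - iss (h 0))‖ ≤ |a N| * (2 * M) := by
      have hg : mass (is (iss (h δ - h 0))) = 0 := by
        rw [map_sub, map_sub, map_sub, hprob_mass δ hδmem, hprob_mass 0 h0mem]
        ring
      have h5 := hconv (h δ - h 0) hg N
      rw [map_sub] at h5
      have h6 : ‖h δ - h 0‖ ≤ 2 * M := by
        calc ‖h δ - h 0‖ ≤ ‖h δ‖ + ‖h 0‖ := norm_sub_le _ _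
          _ ≤ 2 * M := by linarith [hM δ hδmem, hM 0 h0mem]
      calc ‖(Ls 0 ^ N) (iss (h δ) - iss (h 0))‖ ≤ a N * ‖h δ - h 0‖ := h5
        _ ≤ |a N| * (2 * M) := by
          nlinarith [abs_nonneg (a N), le_abs_self (a N), norm_nonneg (h δ - h 0)]
    have hterm2 : ‖iss (h δ) - (Ls 0 ^ N) (iss (h δ))‖ ≤ C * (K' * δ * M) := by
      have htel : ∑ k ∈ Finset.range N, (Ls 0 ^ k) (iss (h δ) - Ls 0 (iss (h δ)))
          = iss (h δ) - (Ls 0 ^ N) (iss (h δ)) := by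
        have h1 : ∀ k : ℕ, (Ls 0 ^ k) (iss (h δ) - Ls 0 (iss (h δ)))
            = (Ls 0 ^ k) (iss (h δ)) - (Ls 0 ^ (k + 1)) (iss (h δ)) := by
          intro k
          rw [map_sub, pow_succ, ContinuousLinearMap.mul_apply]
        simp_rw [h1]
        rw [Finset.sum_range_sub' (fun k => (Ls 0 ^ k) (iss (h δ)))]
        simp
      rw [← htel]
      calc ‖∑ k ∈ Finset.range N, (Ls 0 ^ k) (iss (h δ) - Ls 0 (iss (h δ)))‖
          ≤ ∑ k ∈ Finset.range N, ‖(Ls 0 ^ k) (iss (h δ) - Ls 0 (iss (h δ)))‖ :=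
            norm_sum_le _ _
        _ ≤ ∑ k ∈ Finset.range N, ‖(Ls 0) ^ k‖ * (K' * δ * M) := by
            refine Finset.sum_le_sum fun k _ => ?_
            calc ‖(Ls 0 ^ k) (iss (h δ) - Ls 0 (iss (h δ)))‖
                ≤ ‖(Ls 0) ^ k‖ * ‖iss (h δ) - Ls 0 (iss (h δ))‖ :=
                  ContinuousLinearMap.le_opNorm _ _
              _ ≤ ‖(Ls 0) ^ k‖ * (K' * δ * M) := by
                  refine mul_le_mul_of_nonneg_left ?_ (norm_nonneg _)
                  rw [norm_sub_rev]
                  exact hstep δ hδmem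
        _ = C * (K' * δ * M) := by rw [← Finset.sum_mul]
    have hre : ‖iss (h δ) - iss (h 0)‖ ≤ |a N| * (2 * M) + C * (K' * δ * M) := by
      rw [hdecomp]
      exact (norm_add_le _ _).trans (add_le_add hterm1 hterm2)
    rw [Real.dist_eq, sub_zero, abs_of_nonneg (norm_nonneg _)]
    have h7 : δ * (2 * (C * K' * M + 1)) < ε := (lt_div_iff₀ (by positivity)).1 hδe
    have h8 : (0:ℝ) ≤ C * K' * M := mul_nonneg (mul_nonneg hC0 hK'0) hM0
    nlinarith
  -- the eventual bound
  have hbound : ∀ᶠ δ in 𝓝[>] (0:ℝ),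
      ‖δ⁻¹ • (is (iss (h δ)) - is (iss (h 0))) - Res Ldot‖ ≤
        ‖Res‖ * (‖δ⁻¹ • (Lw δ (is (iss (h 0))) - Lw 0 (is (iss (h 0)))) - Ldot‖
          + K' * ‖iss (h δ) - iss (h 0)‖) := by
    filter_upwards [Ioo_mem_nhdsGT_of_mem (Set.left_mem_Ico.2 hδbar)] with δ hδIoo
    have hδ0 : (0:ℝ) < δ := hδIoo.1
    have hδmem : δ ∈ Ico (0:ℝ) δbar := ⟨hδ0.le, hδIoo.2⟩
    have hg0 := by
      have : mass (is (iss (h δ)) - is (iss (h 0))) = 0 := by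
        rw [map_sub, hprob_mass δ hδmem, hprob_mass 0 h0mem]; ring
      exact this
    have hid := hResId _ hg0
    have e1 : (is (iss (h δ)) - is (iss (h 0))) - Lw 0 (is (iss (h δ)) - is (iss (h 0)))
        = Lw δ (is (iss (h δ))) - Lw 0 (is (iss (h δ))) := by
      rw [map_sub, hfixw 0 h0mem, hfixw δ hδmem]
      abel
    have key : δ⁻¹ • (is (iss (h δ)) - is (iss (h 0))) - Res Ldot =
        Res ((δ⁻¹ • (Lw δ (is (iss (h 0))) - Lw 0 (is (iss (h 0)))) - Ldot)
          + δ⁻¹ • (Lw δ (is (iss (h δ)) - is (iss (h 0)))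
              - Lw 0 (is (iss (h δ)) - is (iss (h 0))))) := by
      conv_lhs => rw [← hid]
      rw [e1]
      simp only [map_add, map_sub, map_smul, smul_add, smul_sub]
      abel
    rw [key]
    have hw : ‖δ⁻¹ • (Lw δ (is (iss (h δ)) - is (iss (h 0)))
        - Lw 0 (is (iss (h δ)) - is (iss (h 0))))‖
        ≤ K' * ‖iss (h δ) - iss (h 0)‖ := by
      have e3 : Lw δ (is (iss (h δ)) - is (iss (h 0)))
          - Lw 0 (is (iss (h δ)) - is (iss (h 0)))
          = -(is (Ls 0 (iss (h δ) - iss (h 0))) - is (Ls δ (iss (h δ) - iss (h 0)))) := by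
        rw [← map_sub is (iss (h δ)) (iss (h 0)), ← hcomm_s δ hδmem, ← hcomm_s 0 h0mem]
        abel
      rw [e3, norm_smul, norm_neg]
      have h4 := hK1 δ hδmem (iss (h δ) - iss (h 0))
      have hn : ‖(δ:ℝ)⁻¹‖ = δ⁻¹ := by
        rw [Real.norm_eq_abs, abs_of_pos (inv_pos.2 hδ0)]
      rw [hn]
      calc δ⁻¹ * ‖is (Ls 0 (iss (h δ) - iss (h 0))) - is (Ls δ (iss (h δ) - iss (h 0)))‖
          ≤ δ⁻¹ * (K * δ * ‖iss (h δ) - iss (h 0)‖) :=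
            mul_le_mul_of_nonneg_left h4 (inv_nonneg.2 hδ0.le)
        _ = K * ‖iss (h δ) - iss (h 0)‖ := by
            rw [mul_comm K δ, mul_assoc, inv_mul_cancel_left₀ hδ0.ne']
        _ ≤ K' * ‖iss (h δ) - iss (h 0)‖ :=
            mul_le_mul_of_nonneg_right hKK' (norm_nonneg _)
    calc ‖Res _‖ ≤ ‖Res‖ * ‖_‖ := Res.le_opNorm _
      _ ≤ ‖Res‖ * (‖δ⁻¹ • (Lw δ (is (iss (h 0))) - Lw 0 (is (iss (h 0)))) - Ldot‖
          + K' * ‖iss (h δ) - iss (h 0)‖) := by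
          refine mul_le_mul_of_nonneg_left ?_ (norm_nonneg _)
          exact (norm_add_le _ _).trans (add_le_add le_rfl hw)
  have hlim : Tendsto (fun δ : ℝ =>
      ‖Res‖ * (‖δ⁻¹ • (Lw δ (is (iss (h 0))) - Lw 0 (is (iss (h 0)))) - Ldot‖
        + K' * ‖iss (h δ) - iss (h 0)‖)) (𝓝[>] (0:ℝ)) (𝓝 0) := by
    have := (hLdot.add (hphi.const_mul K')).const_mul ‖Res‖
    simpa using this
  exact squeeze_zero' (Eventually.of_forall fun δ => norm_nonneg _) hbound hlim
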